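/- Let C, ε > 0 and η > 0, and consider the Euler iterates r₀ = 1, r_{t+1} = r_t + η C ε r_t^{−3} for the vector field V(r) = Cε r^{−3} on [1, ∞). Then there exist constants γ₁, γ₂ > 0 and γ₃ ≥ 0 such that 1 ≤ r_t ≤ γ₁ + γ₂ (t + γ₃)^{1/4} for all t ∈ ℕ. -/

import Mathlib

theorem stmt14 (C ε η : ℝ) (hC : 0 < C) (hε : 0 < ε) (hη : 0 < η)
    (r : ℕ → ℝ) (h0 : r 0 = 1)
    (hstep : ∀ t, r (t + 1) = r t + η * C * ε / r t ^ 3) :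
    ∃ γ₁ γ₂ γ₃ : ℝ, 0 < γ₁ ∧ 0 < γ₂ ∧ 0 ≤ γ₃ ∧
      ∀ t : ℕ, 1 ≤ r t ∧ r t ≤ γ₁ + γ₂ * ((t : ℝ) + γ₃) ^ ((1 : ℝ) / 4) := by
  set b : ℝ := η * C * ε with hb
  have hbpos : 0 < b := by positivity
  set K : ℝ := 4*b + 6*b^2 + 4*b^3 + b^4 with hK
  have hKpos : 0 < K := by positivity
  -- lower bound
  have hlow : ∀ t, 1 ≤ r t := by
    intro t
    induction t with
    | zero => rw [h0]
    | succ n ih =>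
      rw [hstep n]
      have : 0 < b / r n ^ 3 := by positivity
      linarith
  -- fourth power bound
  have hpow : ∀ t, r t ^ 4 ≤ 1 + K * t := by
    intro t
    induction t with
    | zero => simp [h0]
    | succ n ih =>
      have hx : 1 ≤ r n := hlow n
      have hx0 : 0 < r n := by linarith
      have key : (r n + b / r n ^ 3) ^ 4 ≤ r n ^ 4 + K := by
        set y : ℝ := b / r n ^ 3 with hy
        have hy0 : 0 < y := by positivity
        have hxy : r n ^ 3 * y = b := by
          rw [hy]; field_simp
        have hyb : y ≤ b := by
          rw [hy]
          have h3 : 1 ≤ r n ^ 3 := one_le_pow₀ hx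
          rw [div_le_iff₀ (by positivity)]
          nlinarith
        have hyx : y ≤ b * r n := by nlinarith
        -- term bounds
        have t2 : r n ^ 2 * y ^ 2 ≤ b ^ 2 := by nlinarith
        have t3 : r n * y ^ 3 ≤ b ^ 3 := by nlinarith
        have t4 : y ^ 4 ≤ b ^ 4 := pow_le_pow_left₀ hy0.le hyb 4
        have expand : (r n + y) ^ 4 =
            r n ^ 4 + 4 * (r n ^ 3 * y) + 6 * (r n ^ 2 * y ^ 2) +
              4 * (r n * y ^ 3) + y ^ 4 := by ring
        rw [expand, hxy, hK]
        linarith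
      rw [hstep n]
      push_cast
      calc (r n + b / r n ^ 3) ^ 4 ≤ r n ^ 4 + K := key
        _ ≤ 1 + K * n + K := by linarith
        _ = 1 + K * (n + 1) := by ring
  -- choose constants
  refine ⟨1, K ^ ((1:ℝ)/4), 1/K, one_pos, by positivity, by positivity, fun t => ?_⟩
  refine ⟨hlow t, ?_⟩
  have hx : 1 ≤ r t := hlow t
  have hx0 : (0:ℝ) ≤ r t := by linarith
  have h1 : r t ^ 4 ≤ K * ((t:ℝ) + 1/K) := by
    have := hpow t
    have : 1 + K * t = K * ((t:ℝ) + 1/K) := by field_simp; ring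
    linarith [hpow t, this ▸ hpow t]
  have h1' : r t ^ 4 ≤ K * ((t:ℝ) + 1/K) := h1
  have hrt : r t = (r t ^ 4) ^ ((1:ℝ)/4) := by
    rw [← Real.rpow_natCast (r t) 4, ← Real.rpow_mul hx0]
    norm_num
  have hmono : (r t ^ 4) ^ ((1:ℝ)/4) ≤ (K * ((t:ℝ) + 1/K)) ^ ((1:ℝ)/4) := by
    apply Real.rpow_le_rpow (by positivity) h1' (by norm_num)
  have hsplit : (K * ((t:ℝ) + 1/K)) ^ ((1:ℝ)/4)
      = K ^ ((1:ℝ)/4) * ((t:ℝ) + 1/K) ^ ((1:ℝ)/4) := by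
    rw [Real.mul_rpow (le_of_lt hKpos) (by positivity)]
  have : r t ≤ K ^ ((1:ℝ)/4) * ((t:ℝ) + 1/K) ^ ((1:ℝ)/4) := by
    rw [hrt]; rw [hsplit] at hmono; exact hmono
  linarith
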